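/- Let R be a ring, V a right R-module, σ: R → End(V_R) a ring homomorphism, and M = R ⊕ V the rank-1 bimodule extension of V defined by σ and the zero derivation (so r(s+v) = rs + σ(r)(v)). Then the universal R-ring U(M, ι) on M along the inclusion ι: R → M is isomorphic as an R-ring to the tensor ring T(V). -/

import Mathlib

/-- `(U, lamU, jM)` is the universal `R`-ring on the rank-1 bimodule extension
`M = R ⊕ V` along the inclusion `ι : R → M`, where `V` is a right `R`-module and
`M` carries the bimodule structure `r•(s,v) = (rs, σ(r)(v))` (zero derivation) and
`(s,v)·r = (sr, v·r)`: `jM` is a bimodule map with `jM∘ι = lamU`, universal among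
bimodule maps `f : M → A` into `R`-rings with `f∘ι = lamA`. -/
def IsUnivOnRankOneExt {R V : Type} [Ring R] [AddCommGroup V] [Module Rᵐᵒᵖ V]
    (σ : R →+* Module.End Rᵐᵒᵖ V)
    (U : Type) [Ring U] (lamU : R →+* U) (jM : R × V →+ U) : Prop :=
  (∀ r : R, jM (r, 0) = lamU r) ∧
  (∀ (r s : R) (v : V), jM (r * s, σ r v) = lamU r * jM (s, v)) ∧
  (∀ (s : R) (v : V) (r : R),
    jM (s * r, MulOpposite.op r • v) = jM (s, v) * lamU r) ∧
  ∀ (A : Type) [Ring A], ∀ (lamA : R →+* A) (f : R × V →+ A),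
    (∀ r : R, f (r, 0) = lamA r) →
    (∀ (r s : R) (v : V), f (r * s, σ r v) = lamA r * f (s, v)) →
    (∀ (s : R) (v : V) (r : R),
      f (s * r, MulOpposite.op r • v) = f (s, v) * lamA r) →
    ∃! φ : U →+* A, φ.comp lamU = lamA ∧ ∀ m : R × V, φ (jM m) = f m

/-- `(T, lamT, μ)` is the tensor ring `T(V)` of the right `R`-module `V`, viewed
as an `R`-bimodule with left action through `σ`: `μ` is a bimodule map, universal
among bimodule maps `g : V → A` into `R`-rings. -/
def IsTensorRingOfMod {R V : Type} [Ring R] [AddCommGroup V] [Module Rᵐᵒᵖ V]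
    (σ : R →+* Module.End Rᵐᵒᵖ V)
    (T : Type) [Ring T] (lamT : R →+* T) (μ : V →+ T) : Prop :=
  (∀ (r : R) (v : V), μ (σ r v) = lamT r * μ v) ∧
  (∀ (r : R) (v : V), μ (MulOpposite.op r • v) = μ v * lamT r) ∧
  ∀ (A : Type) [Ring A], ∀ (lamA : R →+* A) (g : V →+ A),
    (∀ (r : R) (v : V), g (σ r v) = lamA r * g v) →
    (∀ (r : R) (v : V), g (MulOpposite.op r • v) = g v * lamA r) →
    ∃! φ : T →+* A, φ.comp lamT = lamA ∧ ∀ v : V, φ (μ v) = g v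

/-- For a right `R`-module `V`, a ring homomorphism `σ : R → End(V_R)` and the
rank-1 bimodule extension `M = R ⊕ V` defined by `σ` and the zero derivation, the
universal `R`-ring `U(M, ι)` on `M` along the inclusion `ι : R → M` is isomorphic
as an `R`-ring to the tensor ring `T(V)`. -/
theorem univRankOneExt_iso_tensorRing {R V : Type} [Ring R] [AddCommGroup V]
    [Module Rᵐᵒᵖ V] (σ : R →+* Module.End Rᵐᵒᵖ V)
    (U : Type) [Ring U] (lamU : R →+* U) (jM : R × V →+ U)
    (hU : IsUnivOnRankOneExt σ U lamU jM)
    (T : Type) [Ring T] (lamT : R →+* T) (μ : V →+ T)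
    (hT : IsTensorRingOfMod σ T lamT μ) :
    ∃ e : U ≃+* T, (∀ r : R, e (lamU r) = lamT r) ∧
      ∀ (s : R) (v : V), e (jM (s, v)) = lamT s + μ v := by

  obtain ⟨hU1, hU2, hU3, hUuniv⟩ := hU
  obtain ⟨hT1, hT2, hTuniv⟩ := hT
  -- map M → T
  set f : R × V →+ T :=
    { toFun := fun m => lamT m.1 + μ m.2
      map_zero' := by simp
      map_add' := by intro a b; simp only [Prod.fst_add, Prod.snd_add, map_add]; abel } with hf
  have hf1 : ∀ r : R, f (r, 0) = lamT r := by intro r; simp [hf]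
  have hf2 : ∀ (r s : R) (v : V), f (r * s, σ r v) = lamT r * f (s, v) := by
    intro r s v; simp [hf, hT1, map_mul, mul_add]
  have hf3 : ∀ (s : R) (v : V) (r : R),
      f (s * r, MulOpposite.op r • v) = f (s, v) * lamT r := by
    intro s v r; simp [hf, hT2, map_mul, add_mul]
  obtain ⟨φ, ⟨hφ1, hφ2⟩, hφu⟩ := hUuniv T lamT f hf1 hf2 hf3
  -- map V → U
  set g : V →+ U :=
    { toFun := fun v => jM (0, v)
      map_zero' := by show jM (0, 0) = 0; exact map_zero jM
      map_add' := by
        intro a b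
        show jM (0, a + b) = jM (0, a) + jM (0, b)
        rw [show ((0, a + b) : R × V) = (0, a) + (0, b) by simp, map_add] } with hg
  have hg1 : ∀ (r : R) (v : V), g (σ r v) = lamU r * g v := by
    intro r v
    have := hU2 r 0 v
    simp at this; exact this
  have hg2 : ∀ (r : R) (v : V), g (MulOpposite.op r • v) = g v * lamU r := by
    intro r v
    have := hU3 0 v r
    simp at this; exact this
  obtain ⟨ψ, ⟨hψ1, hψ2⟩, hψu⟩ := hTuniv U lamU g hg1 hg2
  have hjM : ∀ (s : R) (v : V), jM (s, v) = lamU s + jM (0, v) := by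
    intro s v
    have : ((s, v) : R × V) = (s, 0) + (0, v) := by simp
    rw [this, map_add, hU1]
  -- ψ ∘ φ = id
  have hcomp1 : ψ.comp φ = RingHom.id U := by
    obtain ⟨φ₀, _, huniq⟩ := hUuniv U lamU jM hU1 hU2 hU3
    have ha : ψ.comp φ = φ₀ := by
      refine huniq _ ⟨?_, ?_⟩
      · rw [RingHom.comp_assoc, hφ1, hψ1]
      · intro m
        rcases m with ⟨s, v⟩
        simp only [RingHom.coe_comp, Function.comp_apply]
        rw [hφ2 (s, v)]
        show ψ (lamT s + μ v) = _
        rw [map_add, hψ2, ← RingHom.comp_apply, hψ1]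
        show lamU s + jM (0, v) = jM (s, v)
        exact (hjM s v).symm
    have hb : RingHom.id U = φ₀ := by
      refine huniq _ ⟨?_, ?_⟩
      · simp
      · intro m; simp
    rw [ha, hb]
  -- φ ∘ ψ = id
  have hcomp2 : φ.comp ψ = RingHom.id T := by
    obtain ⟨ψ₀, _, huniq⟩ := hTuniv T lamT μ hT1 hT2
    have ha : φ.comp ψ = ψ₀ := by
      refine huniq _ ⟨?_, ?_⟩
      · rw [RingHom.comp_assoc, hψ1, hφ1]
      · intro v
        simp only [RingHom.coe_comp, Function.comp_apply]
        rw [hψ2]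
        show φ (jM (0, v)) = μ v
        rw [hφ2 (0, v)]
        show lamT 0 + μ v = μ v
        simp
    have hb : RingHom.id T = ψ₀ := by
      refine huniq _ ⟨?_, ?_⟩
      · simp
      · intro v; simp
    rw [ha, hb]
  refine ⟨RingEquiv.ofRingHom φ ψ hcomp2 hcomp1, ?_, ?_⟩
  · intro r
    show φ (lamU r) = lamT r
    rw [← RingHom.comp_apply, hφ1]
  · intro s v
    show φ (jM (s, v)) = _
    rw [hφ2 (s, v)]
    rfl
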